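/- If f : ℝ → ℝ is a C⁴ function solving -λ f' = -f⁗ + f(1-f) on ℝ, with f(y) → 1 as y → -∞, f(y) → 0 as y → +∞, all derivatives f', f'', f''' tending to 0 at ±∞, f' ∈ L²(ℝ), and ∫(f')² > 0, then λ ∫_ℝ (f')² dy = 1/6; in particular λ > 0. -/

import Mathlib

open Filter MeasureTheory

theorem biharmonic_TW_energy_identity
    (f : ℝ → ℝ) (l : ℝ)
    (hf : ContDiff ℝ 4 f)
    (hODE : ∀ y : ℝ, -l * deriv f y = -(iteratedDeriv 4 f y) + f y * (1 - f y))
    (hlim1 : Tendsto f atBot (nhds 1))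
    (hlim0 : Tendsto f atTop (nhds 0))
    (hd1top : Tendsto (deriv f) atTop (nhds 0))
    (hd1bot : Tendsto (deriv f) atBot (nhds 0))
    (hd2top : Tendsto (iteratedDeriv 2 f) atTop (nhds 0))
    (hd2bot : Tendsto (iteratedDeriv 2 f) atBot (nhds 0))
    (hd3top : Tendsto (iteratedDeriv 3 f) atTop (nhds 0))
    (hd3bot : Tendsto (iteratedDeriv 3 f) atBot (nhds 0))
    (hL2 : Integrable (fun y : ℝ => (deriv f y)^2))
    (hpos : 0 < ∫ y : ℝ, (deriv f y)^2) :
    l * ∫ y : ℝ, (deriv f y)^2 = 1/6 ∧ 0 < l := by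
  set F : ℝ → ℝ := fun y =>
    iteratedDeriv 3 f y * deriv f y - (iteratedDeriv 2 f y)^2/2
      - (f y)^2/2 + (f y)^3/3 with hF_def
  -- derivatives
  have hdf : ∀ y, HasDerivAt f (deriv f y) y := fun y =>
    ((hf.differentiable (by norm_num)) y).hasDerivAt
  have hdiff : ∀ n : ℕ, n < 4 → Differentiable ℝ (iteratedDeriv n f) := by
    intro n hn
    exact hf.differentiable_iteratedDeriv n (by exact_mod_cast hn)
  have hd1 : ∀ y, HasDerivAt (deriv f) (iteratedDeriv 2 f y) y := by
    intro y
    have h := ((hdiff 1 (by norm_num)) y).hasDerivAt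
    rw [iteratedDeriv_one] at h
    have h2 : iteratedDeriv 2 f = deriv (deriv f) := by
      rw [iteratedDeriv_succ, iteratedDeriv_one]
    rw [h2]
    exact h
  have hd2 : ∀ y, HasDerivAt (iteratedDeriv 2 f) (iteratedDeriv 3 f y) y := by
    intro y
    have h := ((hdiff 2 (by norm_num)) y).hasDerivAt
    have h3 : iteratedDeriv 3 f = deriv (iteratedDeriv 2 f) := iteratedDeriv_succ
    rw [h3]
    exact h
  have hd3 : ∀ y, HasDerivAt (iteratedDeriv 3 f) (iteratedDeriv 4 f y) y := by
    intro y
    have h := ((hdiff 3 (by norm_num)) y).hasDerivAt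
    have h4 : iteratedDeriv 4 f = deriv (iteratedDeriv 3 f) := iteratedDeriv_succ
    rw [h4]
    exact h
  have hFderiv : ∀ y, HasDerivAt F (l * (deriv f y)^2) y := by
    intro y
    have h := ((((hd3 y).mul (hd1 y)).sub (((hd2 y).pow 2).div_const 2)).sub
        (((hdf y).pow 2).div_const 2)).add (((hdf y).pow 3).div_const 3)
    refine h.congr_deriv (Eq.symm ?_)
    push_cast
    have hode := hODE y
    linear_combination (-(deriv f y)) * hode
  have hint : Integrable (fun y => l * (deriv f y)^2) := hL2.const_mul l
  have htop : Tendsto F atTop (nhds 0) := by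
    have h := ((hd3top.mul hd1top).sub ((hd2top.pow 2).div_const 2)).sub
      ((hlim0.pow 2).div_const 2) |>.add ((hlim0.pow 3).div_const 3)
    simpa using h
  have hbot : Tendsto F atBot (nhds (-(1/6))) := by
    have h := ((hd3bot.mul hd1bot).sub ((hd2bot.pow 2).div_const 2)).sub
      ((hlim1.pow 2).div_const 2) |>.add ((hlim1.pow 3).div_const 3)
    have : (0:ℝ) * 0 - 0^2/2 - 1^2/2 + 1^3/3 = -(1/6) := by norm_num
    rwa [this] at h
  have hFTC : ∫ y : ℝ, l * (deriv f y)^2 = 0 - (-(1/6)) :=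
    MeasureTheory.integral_of_hasDerivAt_of_tendsto hFderiv hint hbot htop
  have key : l * ∫ y : ℝ, (deriv f y)^2 = 1/6 := by
    rw [← MeasureTheory.integral_const_mul]
    rw [hFTC]; norm_num
  refine ⟨key, ?_⟩
  by_contra h
  push_neg at h
  nlinarith
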